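/- The bisimulation distance coincides with the logical distance: for an input-enabled probabilistic automaton, D_b(μ,ν) = sup_{φ ∈ 𝓛_m} |φ(μ) − φ(ν)| for all distributions μ, ν. -/

import Mathlib

open Finset

structure ProbDist (S : Type) [Fintype S] where
  f : S → ℝ
  nonneg : ∀ s, 0 ≤ f s
  sum_one : ∑ s, f s = 1

/-- Probability assigned by a distribution to a set of states. -/
noncomputable def ProbDist.pr {S : Type} [Fintype S] (μ : ProbDist S) (C : Set S) : ℝ :=
  ∑ s, C.indicator μ.f s

/-- μ(A) := Σ_{s : L s = A} μ(s). -/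
noncomputable def pOf {S AP : Type} [Fintype S] (L : S → Finset AP) (μ : ProbDist S)
    (A : Finset AP) : ℝ :=
  μ.pr {s | L s = A}

/-- d_AP(μ,ν) := (1/2) Σ_{A ⊆ AP} |μ(A) − ν(A)|. -/
noncomputable def dAP {S AP : Type} [Fintype S] [Fintype AP] [DecidableEq AP]
    (L : S → Finset AP) (μ ν : ProbDist S) : ℝ :=
  (1 / 2) * ∑ A : Finset AP, |pOf L μ A - pOf L ν A|

/-- A (Segala) probabilistic automaton, image-finite. -/
structure PA (S Act AP : Type) [Fintype S] where
  trans : S → Act → ProbDist S → Prop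
  L : S → Finset AP
  imageFinite : ∀ s a, {μ | trans s a μ}.Finite

def PA.InputEnabled {S Act AP : Type} [Fintype S] (M : PA S Act AP) : Prop :=
  ∀ s a, ∃ μ, M.trans s a μ

noncomputable def PA.probOf {S Act AP : Type} [Fintype S] (M : PA S Act AP)
    (μ : ProbDist S) (A : Finset AP) : ℝ := pOf M.L μ A

/-- Combined transition s --a-->_P μ : μ is a convex combination of one-step successors. -/
def Combined {S Act AP : Type} [Fintype S] (M : PA S Act AP) (s : S) (a : Act)
    (μ : ProbDist S) : Prop :=
  ∃ (n : ℕ) (p : Fin n → ℝ) (ν : Fin n → ProbDist S),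
    (∀ i, 0 ≤ p i) ∧ (∑ i, p i = 1) ∧ (∀ i, M.trans s a (ν i)) ∧
    (∀ t, μ.f t = ∑ i, p i * (ν i).f t)

/-- Lifted transition μ --a--> μ' between distributions. -/
def Lifted {S Act AP : Type} [Fintype S] (M : PA S Act AP) (μ : ProbDist S) (a : Act)
    (μ' : ProbDist S) : Prop :=
  ∃ k : S → ProbDist S, (∀ s, 0 < μ.f s → Combined M s a (k s)) ∧
    (∀ t, μ'.f t = ∑ s, μ.f s * (k s).f t)

/-- ProbDist S carries the topology inherited from ℝ^{|S|}. -/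
noncomputable instance {S : Type} [Fintype S] : TopologicalSpace (ProbDist S) :=
  TopologicalSpace.induced (fun μ : ProbDist S => μ.f) inferInstance

/-- A (discounted) approximate bisimulation: a family of symmetric relations. -/
def IsApproxBisim {S Act AP : Type} [Fintype S] [Fintype AP] [DecidableEq AP]
    (M : PA S Act AP) (γ : ℝ) (R : ℝ → ProbDist S → ProbDist S → Prop) : Prop :=
  (∀ ε, Symmetric (R ε)) ∧ ∀ ε μ ν, R ε μ ν →
    dAP M.L μ ν ≤ ε ∧
    ∀ a μ', Lifted M μ a μ' → ∃ ν', Lifted M ν a ν' ∧ R (ε / γ) μ' ν'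

/-- μ ∼_ε ν. -/
def ApproxBisimilar {S Act AP : Type} [Fintype S] [Fintype AP] [DecidableEq AP]
    (M : PA S Act AP) (γ : ℝ) (ε : ℝ) (μ ν : ProbDist S) : Prop :=
  ∃ R, IsApproxBisim M γ R ∧ R ε μ ν

/-- The bisimulation distance D_b(μ,ν) = inf {ε ≥ 0 : μ ∼_ε ν}. -/
noncomputable def Db {S Act AP : Type} [Fintype S] [Fintype AP] [DecidableEq AP]
    (M : PA S Act AP) (γ : ℝ) (μ ν : ProbDist S) : ℝ :=
  sInf {ε | 0 ≤ ε ∧ ApproxBisimilar M γ ε μ ν}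

/-- Formulas of the modal logic 𝓛_m. -/
inductive Fml (AP Act : Type) : Type 1
  | atom : Finset (Finset AP) → Fml AP Act
  | oplus : Fml AP Act → Set.Icc (0 : ℝ) 1 → Fml AP Act
  | neg : Fml AP Act → Fml AP Act
  | conj : (I : Type) → (I → Fml AP Act) → Fml AP Act
  | dia : Act → Fml AP Act → Fml AP Act

/-- Discounted satisfaction function of a formula. -/
noncomputable def sat {S Act AP : Type} [Fintype S] (M : PA S Act AP) (γ : ℝ) :
    Fml AP Act → ProbDist S → ℝ
  | .atom B, μ => ∑ A ∈ B, M.probOf μ A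
  | .oplus φ p, μ => min (sat M γ φ μ + (p : ℝ)) 1
  | .neg φ, μ => 1 - sat M γ φ μ
  | .conj _ φs, μ => ⨅ i, sat M γ (φs i) μ
  | .dia a φ, μ => ⨆ μ' ∈ {x | Lifted M μ a x}, γ * sat M γ φ μ'

section Helpers

open Finset

variable {S Act AP : Type} [Fintype S] [Fintype AP] [DecidableEq AP]

lemma ProbDist.ext' {μ ν : ProbDist S} (h : μ.f = ν.f) : μ = ν := by
  cases μ; cases ν; simpa using h

instance : Nonempty (Fml AP Act) := ⟨.atom ∅⟩

/-- Total variation distance. -/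
noncomputable def tv (μ ν : ProbDist S) : ℝ := (1/2) * ∑ s, |μ.f s - ν.f s|

lemma tv_nonneg (μ ν : ProbDist S) : 0 ≤ tv μ ν := by
  have : (0:ℝ) ≤ ∑ s, |μ.f s - ν.f s| := Finset.sum_nonneg fun s _ => abs_nonneg _
  unfold tv; linarith

lemma abs_sum_filter_le_half {ι : Type} [Fintype ι] (d : ι → ℝ) (h : ∑ i, d i = 0)
    (P : ι → Prop) [DecidablePred P] :
    |∑ i ∈ Finset.univ.filter P, d i| ≤ (1/2) * ∑ i, |d i| := by
  have hsplit : ∑ i ∈ Finset.univ.filter P, d i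
      + ∑ i ∈ Finset.univ.filter (fun i => ¬ P i), d i = 0 := by
    rw [Finset.sum_filter_add_sum_filter_not]; exact h
  have h1 : |∑ i ∈ Finset.univ.filter P, d i| ≤ ∑ i ∈ Finset.univ.filter P, |d i| :=
    Finset.abs_sum_le_sum_abs _ _
  have h2 : |∑ i ∈ Finset.univ.filter (fun i => ¬ P i), d i|
      ≤ ∑ i ∈ Finset.univ.filter (fun i => ¬ P i), |d i| :=
    Finset.abs_sum_le_sum_abs _ _
  have h3 : ∑ i ∈ Finset.univ.filter P, |d i|
      + ∑ i ∈ Finset.univ.filter (fun i => ¬ P i), |d i| = ∑ i, |d i| :=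
    Finset.sum_filter_add_sum_filter_not _ _ _
  have h4 : |∑ i ∈ Finset.univ.filter (fun i => ¬ P i), d i|
      = |∑ i ∈ Finset.univ.filter P, d i| := by
    have he : ∑ i ∈ Finset.univ.filter (fun i => ¬ P i), d i
        = - ∑ i ∈ Finset.univ.filter P, d i := by linarith
    rw [he, abs_neg]
  linarith

lemma pOf_eq_sum_filter (L : S → Finset AP) (μ : ProbDist S) (A : Finset AP) :
    pOf L μ A = ∑ s ∈ Finset.univ.filter (fun s => L s = A), μ.f s := by
  rw [pOf, ProbDist.pr, Finset.sum_filter]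
  exact Finset.sum_congr rfl fun s _ => by simp [Set.indicator_apply, Set.mem_setOf_eq]

lemma pOf_nonneg (L : S → Finset AP) (μ : ProbDist S) (A : Finset AP) : 0 ≤ pOf L μ A := by
  rw [pOf_eq_sum_filter]; exact Finset.sum_nonneg fun s _ => μ.nonneg s

lemma sum_pOf (L : S → Finset AP) (μ : ProbDist S) : ∑ A : Finset AP, pOf L μ A = 1 := by
  simp only [pOf_eq_sum_filter]
  rw [Finset.sum_fiberwise]
  exact μ.sum_one

lemma dAP_nonneg (L : S → Finset AP) (μ ν : ProbDist S) : 0 ≤ dAP L μ ν := by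
  have : (0:ℝ) ≤ ∑ A : Finset AP, |pOf L μ A - pOf L ν A| :=
    Finset.sum_nonneg fun A _ => abs_nonneg _
  unfold dAP; linarith

lemma dAP_le_one (L : S → Finset AP) (μ ν : ProbDist S) : dAP L μ ν ≤ 1 := by
  unfold dAP
  have h : ∑ A : Finset AP, |pOf L μ A - pOf L ν A|
      ≤ ∑ A : Finset AP, (pOf L μ A + pOf L ν A) := by
    apply Finset.sum_le_sum; intro A _
    have h1 := pOf_nonneg L μ A; have h2 := pOf_nonneg L ν A
    rw [abs_le]; constructor <;> linarith
  rw [Finset.sum_add_distrib, sum_pOf, sum_pOf] at h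
  linarith

lemma abs_sum_sub_le_dAP (L : S → Finset AP) (μ ν : ProbDist S) (B : Finset (Finset AP)) :
    |∑ A ∈ B, (pOf L μ A - pOf L ν A)| ≤ dAP L μ ν := by
  have h0 : ∑ A : Finset AP, (pOf L μ A - pOf L ν A) = 0 := by
    rw [Finset.sum_sub_distrib, sum_pOf, sum_pOf]; ring
  have := abs_sum_filter_le_half (fun A => pOf L μ A - pOf L ν A) h0 (fun A => A ∈ B)
  have hfil : Finset.univ.filter (fun A => A ∈ B) = B := by ext A; simp
  rw [hfil] at this
  exact this

/-- Mix of distributions. -/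
noncomputable def mix (x : ProbDist S) (k : S → ProbDist S) : ProbDist S where
  f t := ∑ s, x.f s * (k s).f t
  nonneg t := Finset.sum_nonneg fun s _ => mul_nonneg (x.nonneg s) ((k s).nonneg t)
  sum_one := by
    rw [Finset.sum_comm]
    have h : ∀ s : S, ∑ t, x.f s * (k s).f t = x.f s := by
      intro s; rw [← Finset.mul_sum, (k s).sum_one, mul_one]
    simp only [h]; exact x.sum_one

lemma mix_f (x : ProbDist S) (k : S → ProbDist S) (t : S) :
    (mix x k).f t = ∑ s, x.f s * (k s).f t := rfl

lemma combined_of_trans {M : PA S Act AP} {s : S} {a : Act} {c : ProbDist S}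
    (h : M.trans s a c) : Combined M s a c :=
  ⟨1, fun _ => 1, fun _ => c, fun _ => zero_le_one, by simp, fun _ => h, fun t => by simp⟩

lemma combined_nonempty {M : PA S Act AP} (hM : M.InputEnabled) (s : S) (a : Act) :
    ∃ c, Combined M s a c :=
  (hM s a).imp fun _ h => combined_of_trans h

lemma lifted_mix {M : PA S Act AP} {a : Act} (k : S → ProbDist S)
    (h : ∀ s, Combined M s a (k s)) (x : ProbDist S) : Lifted M x a (mix x k) :=
  ⟨k, fun s _ => h s, fun _ => rfl⟩

lemma lifted_iff_mix {M : PA S Act AP} (hM : M.InputEnabled) {x x' : ProbDist S} {a : Act} :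
    Lifted M x a x' ↔ ∃ k : S → ProbDist S, (∀ s, Combined M s a (k s)) ∧ x' = mix x k := by
  constructor
  · rintro ⟨k, hk, hf⟩
    choose c hc using fun s => combined_nonempty hM s a
    refine ⟨fun s => if h : 0 < x.f s then k s else c s, fun s => ?_,
      ProbDist.ext' (funext fun t => ?_)⟩
    · by_cases h : 0 < x.f s
      · simpa [h] using hk s h
      · simpa [h] using hc s
    · rw [hf t, mix_f]
      apply Finset.sum_congr rfl; intro s _
      by_cases h : 0 < x.f s
      · simp [h]
      · have hz : x.f s = 0 := le_antisymm (not_lt.1 h) (x.nonneg s)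
        simp [hz]
  · rintro ⟨k, hk, rfl⟩; exact lifted_mix k hk x

lemma exists_lifted {M : PA S Act AP} (hM : M.InputEnabled) (x : ProbDist S) (a : Act) :
    ∃ x', Lifted M x a x' := by
  choose c hc using fun s => combined_nonempty hM s a
  exact ⟨mix x c, lifted_mix c hc x⟩

lemma tv_mix_le (x y : ProbDist S) (k : S → ProbDist S) : tv (mix x k) (mix y k) ≤ tv x y := by
  unfold tv
  have key : ∑ t, |(mix x k).f t - (mix y k).f t| ≤ ∑ s, |x.f s - y.f s| := by
    calc ∑ t, |(mix x k).f t - (mix y k).f t|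
        ≤ ∑ t, ∑ s, |x.f s - y.f s| * (k s).f t := by
          apply Finset.sum_le_sum; intro t _
          rw [mix_f, mix_f, ← Finset.sum_sub_distrib]
          refine le_trans (Finset.abs_sum_le_sum_abs _ _) ?_
          apply Finset.sum_le_sum; intro s _
          rw [← sub_mul, abs_mul, abs_of_nonneg ((k s).nonneg t)]
      _ = ∑ s, |x.f s - y.f s| := by
          rw [Finset.sum_comm]
          apply Finset.sum_congr rfl; intro s _
          rw [← Finset.mul_sum, (k s).sum_one, mul_one]
  linarith

lemma sat_bounds {M : PA S Act AP} {γ : ℝ} (hγ0 : 0 ≤ γ) (hγ1 : γ ≤ 1) (φ : Fml AP Act) :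
    ∀ x : ProbDist S, 0 ≤ sat M γ φ x ∧ sat M γ φ x ≤ 1 := by
  induction φ with
  | atom B =>
    intro x; constructor
    · exact Finset.sum_nonneg fun A _ => pOf_nonneg M.L x A
    · show ∑ A ∈ B, pOf M.L x A ≤ 1
      calc ∑ A ∈ B, pOf M.L x A ≤ ∑ A : Finset AP, pOf M.L x A :=
            Finset.sum_le_sum_of_subset_of_nonneg (Finset.subset_univ B)
              (fun A _ _ => pOf_nonneg M.L x A)
        _ = 1 := sum_pOf M.L x
  | oplus φ p ih =>
    intro x
    have h := ih x; have hp1 := p.2.1; have hp2 := p.2.2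
    constructor
    · exact le_min (by linarith) zero_le_one
    · exact min_le_right _ _
  | neg φ ih =>
    intro x; have h := ih x
    constructor
    · show (0:ℝ) ≤ 1 - sat M γ φ x; linarith [h.2]
    · show 1 - sat M γ φ x ≤ 1; linarith [h.1]
  | conj I φs ih =>
    intro x; constructor
    · exact Real.iInf_nonneg fun i => (ih i x).1
    · rcases isEmpty_or_nonempty I with h | h
      · show ⨅ i, sat M γ (φs i) x ≤ 1
        rw [Real.iInf_of_isEmpty]; exact zero_le_one
      · exact ciInf_le_of_le ⟨0, by rintro v ⟨i, rfl⟩; exact (ih i x).1⟩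
          (Classical.arbitrary I) (ih _ x).2
  | dia a φ ih =>
    intro x; constructor
    · exact Real.iSup_nonneg fun x' => Real.iSup_nonneg fun _ =>
        mul_nonneg hγ0 (ih x').1
    · refine Real.iSup_le (fun x' => Real.iSup_le (fun _ => ?_) zero_le_one) zero_le_one
      nlinarith [(ih x').1, (ih x').2]

lemma dia_le {M : PA S Act AP} {γ : ℝ} {a : Act} {φ : Fml AP Act} {x : ProbDist S} {c : ℝ}
    (hc : 0 ≤ c) (h : ∀ x', Lifted M x a x' → γ * sat M γ φ x' ≤ c) :
    sat M γ (.dia a φ) x ≤ c := by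
  show (⨆ x' ∈ {z | Lifted M x a z}, γ * sat M γ φ x') ≤ c
  exact Real.iSup_le (fun x' => Real.iSup_le (fun hx' => h x' hx') hc) hc

lemma le_dia {M : PA S Act AP} {γ : ℝ} (hγ0 : 0 ≤ γ) (hγ1 : γ ≤ 1) {a : Act} {φ : Fml AP Act}
    {x x' : ProbDist S} (h : Lifted M x a x') :
    γ * sat M γ φ x' ≤ sat M γ (.dia a φ) x := by
  show γ * sat M γ φ x' ≤ ⨆ y ∈ {z | Lifted M x a z}, γ * sat M γ φ y
  have hb : BddAbove (Set.range fun y => ⨆ _ : y ∈ {z | Lifted M x a z}, γ * sat M γ φ y) := by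
    refine ⟨1, ?_⟩; rintro v ⟨y, rfl⟩
    refine Real.iSup_le (fun _ => ?_) zero_le_one
    have hy := sat_bounds (M := M) hγ0 hγ1 φ y
    nlinarith [hy.1, hy.2]
  refine le_trans ?_ (le_ciSup hb x')
  have : Nonempty (x' ∈ {z | Lifted M x a z}) := ⟨h⟩
  rw [ciSup_const]

lemma tv_comm (x y : ProbDist S) : tv x y = tv y x := by
  unfold tv; congr 1; exact Finset.sum_congr rfl fun s _ => abs_sub_comm _ _

lemma sat_atom_sub (M : PA S Act AP) (γ : ℝ) (B : Finset (Finset AP)) (x y : ProbDist S) :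
    sat M γ (.atom B) x - sat M γ (.atom B) y = ∑ A ∈ B, (pOf M.L x A - pOf M.L y A) := by
  show (∑ A ∈ B, pOf M.L x A) - (∑ A ∈ B, pOf M.L y A) = _
  rw [Finset.sum_sub_distrib]

lemma dAP_le_tv (L : S → Finset AP) (x y : ProbDist S) : dAP L x y ≤ tv x y := by
  unfold dAP tv
  have h : ∑ A : Finset AP, |pOf L x A - pOf L y A| ≤ ∑ s, |x.f s - y.f s| := by
    calc ∑ A : Finset AP, |pOf L x A - pOf L y A|
        ≤ ∑ A : Finset AP, ∑ s ∈ Finset.univ.filter (fun s => L s = A), |x.f s - y.f s| := by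
          apply Finset.sum_le_sum; intro A _
          rw [pOf_eq_sum_filter, pOf_eq_sum_filter, ← Finset.sum_sub_distrib]
          exact Finset.abs_sum_le_sum_abs _ _
      _ = ∑ s, |x.f s - y.f s| := by rw [Finset.sum_fiberwise]
  linarith

lemma sat_lipschitz {M : PA S Act AP} {γ : ℝ} (hM : M.InputEnabled)
    (hγ0 : 0 ≤ γ) (hγ1 : γ ≤ 1) (φ : Fml AP Act) :
    ∀ x y : ProbDist S, |sat M γ φ x - sat M γ φ y| ≤ tv x y := by
  induction φ with
  | atom B =>
    intro x y
    rw [sat_atom_sub]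
    exact le_trans (abs_sum_sub_le_dAP M.L x y B) (dAP_le_tv M.L x y)
  | oplus φ p ih =>
    intro x y
    refine le_trans ?_ (ih x y)
    show |min (sat M γ φ x + (p:ℝ)) 1 - min (sat M γ φ y + (p:ℝ)) 1| ≤ _
    refine le_trans (abs_min_sub_min_le_max _ _ _ _) ?_
    simp only [sub_self, abs_zero, add_sub_add_right_eq_sub]
    exact max_le le_rfl (abs_nonneg _)
  | neg φ ih =>
    intro x y
    show |(1 - sat M γ φ x) - (1 - sat M γ φ y)| ≤ _
    rw [show (1 - sat M γ φ x) - (1 - sat M γ φ y) = -(sat M γ φ x - sat M γ φ y) by ring,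
      abs_neg]
    exact ih x y
  | conj I φs ih =>
    intro x y
    show |(⨅ i, sat M γ (φs i) x) - ⨅ i, sat M γ (φs i) y| ≤ _
    rcases isEmpty_or_nonempty I with h | h
    · rw [Real.iInf_of_isEmpty, Real.iInf_of_isEmpty]
      simpa using tv_nonneg x y
    · have hbx : BddBelow (Set.range fun i => sat M γ (φs i) x) :=
        ⟨0, by rintro v ⟨i, rfl⟩; exact (sat_bounds hγ0 hγ1 (φs i) x).1⟩
      have hby : BddBelow (Set.range fun i => sat M γ (φs i) y) :=
        ⟨0, by rintro v ⟨i, rfl⟩; exact (sat_bounds hγ0 hγ1 (φs i) y).1⟩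
      rw [abs_le]; constructor
      · rw [neg_le, neg_sub]
        have : ∀ i, (⨅ j, sat M γ (φs j) y) ≤ sat M γ (φs i) x + tv x y := by
          intro i
          have h1 : (⨅ j, sat M γ (φs j) y) ≤ sat M γ (φs i) y := ciInf_le hby i
          have h2 := abs_le.1 (ih i x y)
          linarith [h2.1]
        have := le_ciInf (f := fun i => sat M γ (φs i) x)
          (fun i => by linarith [this i] : ∀ i, (⨅ j, sat M γ (φs j) y) - tv x y ≤ sat M γ (φs i) x)
        linarith
      · have : ∀ i, (⨅ j, sat M γ (φs j) x) ≤ sat M γ (φs i) y + tv x y := by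
          intro i
          have h1 : (⨅ j, sat M γ (φs j) x) ≤ sat M γ (φs i) x := ciInf_le hbx i
          have h2 := abs_le.1 (ih i x y)
          linarith [h2.2]
        have := le_ciInf (f := fun i => sat M γ (φs i) y)
          (fun i => by linarith [this i] : ∀ i, (⨅ j, sat M γ (φs j) x) - tv x y ≤ sat M γ (φs i) y)
        linarith
  | dia a φ ih =>
    intro x y
    have key : ∀ u v : ProbDist S, sat M γ (.dia a φ) u ≤ sat M γ (.dia a φ) v + tv u v := by
      intro u v
      have hc : (0:ℝ) ≤ sat M γ (.dia a φ) v + tv u v := by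
        have := (sat_bounds (M := M) hγ0 hγ1 (.dia a φ) v).1
        linarith [tv_nonneg u v]
      refine dia_le hc ?_
      intro u' hu'
      obtain ⟨k, hk, rfl⟩ := (lifted_iff_mix hM).1 hu'
      have hv' : Lifted M v a (mix v k) := lifted_mix k hk v
      have h1 : |sat M γ φ (mix u k) - sat M γ φ (mix v k)| ≤ tv u v :=
        le_trans (ih (mix u k) (mix v k)) (tv_mix_le u v k)
      have h2 := le_dia (M := M) hγ0 hγ1 hv' (φ := φ)
      have h3 := abs_le.1 h1
      nlinarith [tv_nonneg u v, h3.1]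
    have h1 := key x y
    have h2 := key y x
    rw [tv_comm y x] at h2
    rw [abs_le]; constructor <;> linarith

/-- The logical distance. -/
noncomputable def ld (M : PA S Act AP) (γ : ℝ) (x y : ProbDist S) : ℝ :=
  ⨆ φ : Fml AP Act, |sat M γ φ x - sat M γ φ y|

lemma ld_bddAbove {M : PA S Act AP} {γ : ℝ} (hγ0 : 0 ≤ γ) (hγ1 : γ ≤ 1) (x y : ProbDist S) :
    BddAbove (Set.range fun φ : Fml AP Act => |sat M γ φ x - sat M γ φ y|) := by
  refine ⟨1, ?_⟩; rintro v ⟨φ, rfl⟩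
  have h1 := sat_bounds (M := M) hγ0 hγ1 φ x
  have h2 := sat_bounds (M := M) hγ0 hγ1 φ y
  rw [abs_le]; constructor <;> linarith [h1.1, h1.2, h2.1, h2.2]

lemma le_ld {M : PA S Act AP} {γ : ℝ} (hγ0 : 0 ≤ γ) (hγ1 : γ ≤ 1) (φ : Fml AP Act)
    (x y : ProbDist S) : |sat M γ φ x - sat M γ φ y| ≤ ld M γ x y :=
  le_ciSup (ld_bddAbove hγ0 hγ1 x y) φ

lemma ld_le {M : PA S Act AP} {γ : ℝ} {x y : ProbDist S} {c : ℝ}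
    (h : ∀ φ : Fml AP Act, |sat M γ φ x - sat M γ φ y| ≤ c) : ld M γ x y ≤ c :=
  ciSup_le h

lemma ld_nonneg (M : PA S Act AP) (γ : ℝ) (x y : ProbDist S) : 0 ≤ ld M γ x y :=
  Real.iSup_nonneg fun _ => abs_nonneg _

lemma ld_comm (M : PA S Act AP) (γ : ℝ) (x y : ProbDist S) : ld M γ x y = ld M γ y x := by
  unfold ld
  congr 1; funext φ; rw [abs_sub_comm]

lemma dAP_le_ld {M : PA S Act AP} {γ : ℝ} (hγ0 : 0 ≤ γ) (hγ1 : γ ≤ 1) (x y : ProbDist S) :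
    dAP M.L x y ≤ ld M γ x y := by
  classical
  set B : Finset (Finset AP) :=
    Finset.univ.filter (fun A => 0 ≤ pOf M.L x A - pOf M.L y A) with hB
  have hkey : ∑ A ∈ B, (pOf M.L x A - pOf M.L y A) = dAP M.L x y := by
    have h0 : ∑ A : Finset AP, (pOf M.L x A - pOf M.L y A) = 0 := by
      rw [Finset.sum_sub_distrib, sum_pOf, sum_pOf]; ring
    have hsplit : ∑ A ∈ B, (pOf M.L x A - pOf M.L y A)
        + ∑ A ∈ Finset.univ.filter (fun A => ¬ 0 ≤ pOf M.L x A - pOf M.L y A),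
            (pOf M.L x A - pOf M.L y A) = 0 := by
      rw [hB, Finset.sum_filter_add_sum_filter_not]; exact h0
    have habs : ∑ A : Finset AP, |pOf M.L x A - pOf M.L y A|
        = ∑ A ∈ B, (pOf M.L x A - pOf M.L y A)
        - ∑ A ∈ Finset.univ.filter (fun A => ¬ 0 ≤ pOf M.L x A - pOf M.L y A),
            (pOf M.L x A - pOf M.L y A) := by
      rw [← Finset.sum_filter_add_sum_filter_not Finset.univ
        (fun A => 0 ≤ pOf M.L x A - pOf M.L y A) (fun A => |pOf M.L x A - pOf M.L y A|)]
      rw [sub_eq_add_neg, ← Finset.sum_neg_distrib]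
      congr 1
      · exact Finset.sum_congr rfl fun A hA => abs_of_nonneg (Finset.mem_filter.1 hA).2
      · exact Finset.sum_congr rfl fun A hA =>
          abs_of_neg (lt_of_not_ge (Finset.mem_filter.1 hA).2)
    unfold dAP
    linarith
  calc dAP M.L x y = ∑ A ∈ B, (pOf M.L x A - pOf M.L y A) := hkey.symm
    _ = sat M γ (.atom B) x - sat M γ (.atom B) y := (sat_atom_sub M γ B x y).symm
    _ ≤ |sat M γ (.atom B) x - sat M γ (.atom B) y| := le_abs_self _
    _ ≤ ld M γ x y := le_ld hγ0 hγ1 _ x y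

lemma ld_lipschitz {M : PA S Act AP} {γ : ℝ} (hM : M.InputEnabled) (hγ0 : 0 ≤ γ) (hγ1 : γ ≤ 1)
    (x' : ProbDist S) (u v : ProbDist S) : |ld M γ x' u - ld M γ x' v| ≤ tv u v := by
  have key : ∀ a b : ProbDist S, ld M γ x' a ≤ ld M γ x' b + tv a b := by
    intro a b
    refine ld_le fun φ => ?_
    have h1 := le_ld (M := M) hγ0 hγ1 φ x' b
    have h2 := sat_lipschitz hM hγ0 hγ1 φ b a
    have h3 := abs_sub_abs_le_abs_sub (sat M γ φ x' - sat M γ φ a) (sat M γ φ x' - sat M γ φ b)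
    have h4 : |sat M γ φ x' - sat M γ φ a - (sat M γ φ x' - sat M γ φ b)|
        = |sat M γ φ b - sat M γ φ a| := by rw [show sat M γ φ x' - sat M γ φ a
          - (sat M γ φ x' - sat M γ φ b) = sat M γ φ b - sat M γ φ a by ring]
    rw [h4] at h3
    rw [tv_comm]
    linarith
  have h1 := key u v
  have h2 := key v u
  rw [tv_comm v u] at h2
  rw [abs_le]; constructor <;> linarith

lemma continuous_probDist_f : Continuous (fun μ : ProbDist S => μ.f) :=
  continuous_induced_dom

lemma ld_continuous {M : PA S Act AP} {γ : ℝ} (hM : M.InputEnabled) (hγ0 : 0 ≤ γ) (hγ1 : γ ≤ 1)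
    (x' : ProbDist S) : Continuous (fun y => ld M γ x' y) := by
  rw [continuous_iff_continuousAt]
  intro b
  rw [ContinuousAt, tendsto_iff_dist_tendsto_zero]
  have hbound : ∀ a : ProbDist S, dist (ld M γ x' a) (ld M γ x' b) ≤ tv a b := by
    intro a; rw [Real.dist_eq]; exact ld_lipschitz hM hγ0 hγ1 x' a b
  have htv : Filter.Tendsto (fun a : ProbDist S => tv a b) (nhds b) (nhds 0) := by
    have hc : Continuous fun a : ProbDist S => tv a b := by
      unfold tv
      refine Continuous.mul continuous_const ?_
      refine continuous_finset_sum _ fun s _ => ?_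
      exact ((continuous_apply s).comp continuous_probDist_f).sub continuous_const |>.abs
    have := hc.tendsto b
    have hz : tv b b = 0 := by unfold tv; simp
    rwa [hz] at this
  exact squeeze_zero (fun a => dist_nonneg) hbound htv

lemma sat_sound {M : PA S Act AP} {γ : ℝ} (hγ0 : 0 < γ) (hγ1 : γ ≤ 1) (φ : Fml AP Act) :
    ∀ (ε : ℝ) (x y : ProbDist S), ApproxBisimilar M γ ε x y → |sat M γ φ x - sat M γ φ y| ≤ ε := by
  induction φ with
  | atom B =>
    rintro ε x y ⟨R, hR, hRxy⟩
    have hd := (hR.2 ε x y hRxy).1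
    rw [sat_atom_sub]
    exact le_trans (abs_sum_sub_le_dAP M.L x y B) hd
  | oplus φ p ih =>
    intro ε x y hb
    refine le_trans ?_ (ih ε x y hb)
    show |min (sat M γ φ x + (p:ℝ)) 1 - min (sat M γ φ y + (p:ℝ)) 1| ≤ _
    refine le_trans (abs_min_sub_min_le_max _ _ _ _) ?_
    simp only [sub_self, abs_zero, add_sub_add_right_eq_sub]
    exact max_le le_rfl (abs_nonneg _)
  | neg φ ih =>
    intro ε x y hb
    show |(1 - sat M γ φ x) - (1 - sat M γ φ y)| ≤ _
    rw [show (1 - sat M γ φ x) - (1 - sat M γ φ y) = -(sat M γ φ x - sat M γ φ y) by ring,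
      abs_neg]
    exact ih ε x y hb
  | conj I φs ih =>
    intro ε x y hb
    have hε : 0 ≤ ε := by
      obtain ⟨R, hR, hRxy⟩ := hb
      exact le_trans (dAP_nonneg M.L x y) (hR.2 ε x y hRxy).1
    show |(⨅ i, sat M γ (φs i) x) - ⨅ i, sat M γ (φs i) y| ≤ _
    rcases isEmpty_or_nonempty I with h | h
    · rw [Real.iInf_of_isEmpty, Real.iInf_of_isEmpty]; simpa using hε
    · have hbx : BddBelow (Set.range fun i => sat M γ (φs i) x) :=
        ⟨0, by rintro v ⟨i, rfl⟩; exact (sat_bounds hγ0.le hγ1 (φs i) x).1⟩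
      have hby : BddBelow (Set.range fun i => sat M γ (φs i) y) :=
        ⟨0, by rintro v ⟨i, rfl⟩; exact (sat_bounds hγ0.le hγ1 (φs i) y).1⟩
      rw [abs_le]; constructor
      · rw [neg_le, neg_sub]
        have hh : ∀ i, (⨅ j, sat M γ (φs j) y) ≤ sat M γ (φs i) x + ε := by
          intro i
          have h1 : (⨅ j, sat M γ (φs j) y) ≤ sat M γ (φs i) y := ciInf_le hby i
          have h2 := abs_le.1 (ih i ε x y hb)
          linarith [h2.1]
        have := le_ciInf (f := fun i => sat M γ (φs i) x)
          (fun i => by linarith [hh i] : ∀ i, (⨅ j, sat M γ (φs j) y) - ε ≤ sat M γ (φs i) x)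
        linarith
      · have hh : ∀ i, (⨅ j, sat M γ (φs j) x) ≤ sat M γ (φs i) y + ε := by
          intro i
          have h1 : (⨅ j, sat M γ (φs j) x) ≤ sat M γ (φs i) x := ciInf_le hbx i
          have h2 := abs_le.1 (ih i ε x y hb)
          linarith [h2.2]
        have := le_ciInf (f := fun i => sat M γ (φs i) y)
          (fun i => by linarith [hh i] : ∀ i, (⨅ j, sat M γ (φs j) x) - ε ≤ sat M γ (φs i) y)
        linarith
  | dia a φ ih =>
    rintro ε x y ⟨R, hR, hRxy⟩
    have hε : 0 ≤ ε := le_trans (dAP_nonneg M.L x y) (hR.2 ε x y hRxy).1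
    have key : ∀ u v : ProbDist S, R ε u v →
        sat M γ (.dia a φ) u ≤ sat M γ (.dia a φ) v + ε := by
      intro u v hRuv
      have hc : (0:ℝ) ≤ sat M γ (.dia a φ) v + ε := by
        have := (sat_bounds (M := M) hγ0.le hγ1 (.dia a φ) v).1; linarith
      refine dia_le hc ?_
      intro u' hu'
      obtain ⟨v', hv', hRv⟩ := (hR.2 ε u v hRuv).2 a u' hu'
      have hbis : ApproxBisimilar M γ (ε / γ) u' v' := ⟨R, hR, hRv⟩
      have h1 := abs_le.1 (ih (ε / γ) u' v' hbis)
      have h2 := le_dia (M := M) hγ0.le hγ1 hv' (φ := φ)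
      have h3 : γ * sat M γ φ u' ≤ γ * sat M γ φ v' + γ * (ε / γ) := by
        nlinarith [h1.1]
      rw [mul_div_cancel₀ ε (ne_of_gt hγ0)] at h3
      linarith
    have h1 := key x y hRxy
    have h2 := key y x (hR.1 ε hRxy)
    rw [abs_le]; constructor <;> linarith

lemma approxBisimilar_one {M : PA S Act AP} (hM : M.InputEnabled) {γ : ℝ}
    (hγ0 : 0 < γ) (hγ1 : γ ≤ 1) (x y : ProbDist S) : ApproxBisimilar M γ 1 x y := by
  refine ⟨fun ε _ _ => 1 ≤ ε, ⟨fun ε u v h => h, ?_⟩, le_rfl⟩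
  intro ε u v hε
  refine ⟨le_trans (dAP_le_one M.L u v) hε, ?_⟩
  intro a u' _
  obtain ⟨v', hv'⟩ := exists_lifted hM v a
  refine ⟨v', hv', ?_⟩
  calc (1:ℝ) ≤ ε := hε
    _ ≤ ε / γ := by
      rw [le_div_iff₀ hγ0]
      nlinarith

lemma isEmbedding_probDist_f :
    Topology.IsEmbedding (fun μ : ProbDist S => μ.f) :=
  ⟨⟨rfl⟩, fun a b h => ProbDist.ext' h⟩

/-- The set of combined transitions from a state. -/
def CombSet (M : PA S Act AP) (s : S) (a : Act) : Set (ProbDist S) := {c | Combined M s a c}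

lemma image_combSet (M : PA S Act AP) (s : S) (a : Act) :
    (fun c : ProbDist S => c.f) '' CombSet M s a
      = convexHull ℝ ((fun c : ProbDist S => c.f) '' {c | M.trans s a c}) := by
  apply Set.Subset.antisymm
  · rintro _ ⟨c, ⟨n, p, w, hp, hsum, ht, hf⟩, rfl⟩
    have hcf : c.f = ∑ i : Fin n, p i • (w i).f := by
      funext t
      rw [hf t]
      simp [Finset.sum_apply]
    show c.f ∈ _
    rw [hcf]
    exact (convex_convexHull ℝ _).sum_mem (fun i _ => hp i) hsum
      (fun i _ => subset_convexHull ℝ _ ⟨w i, ht i, rfl⟩)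
  · intro x hx
    rw [mem_convexHull_iff_exists_fintype] at hx
    obtain ⟨ι, hι, wt, z, hw0, hw1, hz, hx⟩ := hx
    choose u hu huf using hz
    have hxf : ∀ t, x t = ∑ i, wt i * (u i).f t := by
      intro t
      rw [← hx]
      simp only [Finset.sum_apply, Pi.smul_apply, smul_eq_mul]
      exact Finset.sum_congr rfl fun i _ => by rw [← huf i]
    have hnn : ∀ t, 0 ≤ x t := fun t => by
      rw [hxf t]; exact Finset.sum_nonneg fun i _ => mul_nonneg (hw0 i) ((u i).nonneg t)
    have hs1 : ∑ t, x t = 1 := by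
      simp only [hxf]
      rw [Finset.sum_comm]
      have h : ∀ i : ι, ∑ t, wt i * (u i).f t = wt i := by
        intro i; rw [← Finset.mul_sum, (u i).sum_one, mul_one]
      simp only [h]; exact hw1
    refine ⟨⟨x, hnn, hs1⟩, ?_, rfl⟩
    have e := (Fintype.equivFin ι).symm
    refine ⟨Fintype.card ι, fun j => wt (e j), fun j => u (e j), fun j => hw0 _, ?_,
      fun j => hu _, fun t => ?_⟩
    · rw [Fintype.sum_equiv e (fun j => wt (e j)) wt (fun j => rfl)] at *
      exact hw1
    · show x t = _
      rw [hxf t]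
      exact (Fintype.sum_equiv e (fun j => wt (e j) * (u (e j)).f t)
        (fun i => wt i * (u i).f t) (fun j => rfl)).symm

lemma combSet_compact (M : PA S Act AP) (s : S) (a : Act) : IsCompact (CombSet M s a) := by
  rw [isEmbedding_probDist_f.isCompact_iff, image_combSet]
  exact (Set.Finite.image _ (M.imageFinite s a)).isCompact_convexHull (𝕜 := ℝ)

lemma mix_continuous (y : ProbDist S) : Continuous fun k : S → ProbDist S => mix y k := by
  rw [isEmbedding_probDist_f.continuous_iff]
  show Continuous fun k : S → ProbDist S => (mix y k).f
  refine continuous_pi fun t => ?_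
  simp only [mix_f]
  refine continuous_finset_sum _ fun s _ => ?_
  exact continuous_const.mul
    (((continuous_apply t).comp continuous_probDist_f).comp (continuous_apply s))

lemma liftedSet_eq {M : PA S Act AP} (hM : M.InputEnabled) (y : ProbDist S) (a : Act) :
    {y' | Lifted M y a y'} = (fun k => mix y k) '' (Set.univ.pi fun s => CombSet M s a) := by
  ext y'
  simp only [Set.mem_setOf_eq, Set.mem_image, Set.mem_pi, Set.mem_univ, forall_true_left]
  rw [lifted_iff_mix hM]
  constructor
  · rintro ⟨k, hk, rfl⟩; exact ⟨k, fun s => hk s, rfl⟩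
  · rintro ⟨k, hk, rfl⟩; exact ⟨k, fun s => hk s, rfl⟩

lemma liftedSet_compact {M : PA S Act AP} (hM : M.InputEnabled) (y : ProbDist S) (a : Act) :
    IsCompact {y' | Lifted M y a y'} := by
  rw [liftedSet_eq hM]
  exact (isCompact_univ_pi fun s => combSet_compact M s a).image (mix_continuous y)

lemma liftedSet_nonempty {M : PA S Act AP} (hM : M.InputEnabled) (y : ProbDist S) (a : Act) :
    {y' | Lifted M y a y'}.Nonempty := by
  obtain ⟨y', hy'⟩ := exists_lifted hM y a
  exact ⟨y', hy'⟩

lemma transfer {M : PA S Act AP} (hM : M.InputEnabled) {γ : ℝ} (hγ0 : 0 < γ) (hγ1 : γ ≤ 1)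
    {ε : ℝ} {x y : ProbDist S} (h : ld M γ x y ≤ ε) (a : Act) (x' : ProbDist S)
    (hx' : Lifted M x a x') : ∃ y', Lifted M y a y' ∧ ld M γ x' y' ≤ ε / γ := by
  by_contra hcon
  push_neg at hcon
  obtain ⟨y₀, hy₀, hmin⟩ := (liftedSet_compact hM y a).exists_isMinOn
    (liftedSet_nonempty hM y a) ((ld_continuous hM hγ0.le hγ1 x').continuousOn)
  have hmgt : ε / γ < ld M γ x' y₀ := hcon y₀ hy₀
  set δ := (ld M γ x' y₀ - ε / γ) / 2 with hδ
  have hδpos : 0 < δ := by rw [hδ]; linarith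
  have hub : ∀ y'' : ProbDist S, Lifted M y a y'' → ε / γ + δ < ld M γ x' y'' := by
    intro y'' hy''
    have hmm : ld M γ x' y₀ ≤ ld M γ x' y'' := isMinOn_iff.1 hmin y'' hy''
    rw [hδ]; linarith
  have hchoice : ∀ u : {y'' // Lifted M y a y''}, ∃ φ : Fml AP Act,
      ε / γ + δ < sat M γ φ x' - sat M γ φ u.1 := by
    intro u
    have hlt : ε / γ + δ < ⨆ φ : Fml AP Act, |sat M γ φ x' - sat M γ φ u.1| := hub u.1 u.2
    obtain ⟨φ, hφ⟩ := exists_lt_of_lt_ciSup hlt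
    rcases abs_cases (sat M γ φ x' - sat M γ φ u.1) with ⟨he, _⟩ | ⟨he, _⟩
    · exact ⟨φ, by rw [he] at hφ; exact hφ⟩
    · refine ⟨.neg φ, ?_⟩
      show ε / γ + δ < (1 - sat M γ φ x') - (1 - sat M γ φ u.1)
      rw [he] at hφ; linarith
  choose Φ hΦ using hchoice
  have hp : ∀ u : {y'' // Lifted M y a y''}, (1 - sat M γ (Φ u) x') ∈ Set.Icc (0:ℝ) 1 :=
    fun u => ⟨by linarith [(sat_bounds (M := M) hγ0.le hγ1 (Φ u) x').2],
      by linarith [(sat_bounds (M := M) hγ0.le hγ1 (Φ u) x').1]⟩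
  haveI hne : Nonempty {y'' // Lifted M y a y''} := ⟨⟨y₀, hy₀⟩⟩
  have hΨx' : sat M γ (Fml.conj {y'' // Lifted M y a y''}
      (fun u => .oplus (Φ u) ⟨1 - sat M γ (Φ u) x', hp u⟩)) x' = 1 := by
    show (⨅ u : {y'' // Lifted M y a y''},
      sat M γ (Fml.oplus (Φ u) ⟨1 - sat M γ (Φ u) x', hp u⟩) x') = 1
    have heq : ∀ u : {y'' // Lifted M y a y''},
        sat M γ (Fml.oplus (Φ u) ⟨1 - sat M γ (Φ u) x', hp u⟩) x' = 1 := by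
      intro u
      show min (sat M γ (Φ u) x' + (1 - sat M γ (Φ u) x')) 1 = 1
      rw [add_sub_cancel]
      exact min_self 1
    rw [funext heq]
    exact ciInf_const
  have hΨy'' : ∀ u : {y'' // Lifted M y a y''},
      sat M γ (Fml.conj {y'' // Lifted M y a y''}
        (fun u => .oplus (Φ u) ⟨1 - sat M γ (Φ u) x', hp u⟩)) u.1 ≤ 1 - (ε / γ + δ) := by
    intro u
    have h1 : sat M γ (Fml.conj {y'' // Lifted M y a y''}
        (fun u => .oplus (Φ u) ⟨1 - sat M γ (Φ u) x', hp u⟩)) u.1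
        ≤ sat M γ (Fml.oplus (Φ u) ⟨1 - sat M γ (Φ u) x', hp u⟩) u.1 := by
      show (⨅ v : {y'' // Lifted M y a y''},
        sat M γ (Fml.oplus (Φ v) ⟨1 - sat M γ (Φ v) x', hp v⟩) u.1) ≤ _
      refine ciInf_le ⟨0, ?_⟩ u
      rintro v ⟨w, rfl⟩
      exact (sat_bounds (M := M) hγ0.le hγ1 _ u.1).1
    have h2 : sat M γ (Fml.oplus (Φ u) ⟨1 - sat M γ (Φ u) x', hp u⟩) u.1
        ≤ sat M γ (Φ u) u.1 + (1 - sat M γ (Φ u) x') := min_le_left _ _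
    have h3 := hΦ u
    linarith
  set Ψ : Fml AP Act := Fml.conj {y'' // Lifted M y a y''}
    (fun u => .oplus (Φ u) ⟨1 - sat M γ (Φ u) x', hp u⟩) with hΨ
  have hA : γ * 1 ≤ sat M γ (.dia a Ψ) x := by
    have hle := le_dia (M := M) hγ0.le hγ1 hx' (φ := Ψ)
    rw [hΨ] at hle ⊢
    rw [hΨx'] at hle
    exact hle
  have hnn : (0:ℝ) ≤ 1 - (ε / γ + δ) := by
    have hb := (sat_bounds (M := M) hγ0.le hγ1 Ψ y₀).1
    have := hΨy'' ⟨y₀, hy₀⟩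
    linarith
  have hB : sat M γ (.dia a Ψ) y ≤ γ * (1 - (ε / γ + δ)) := by
    refine dia_le (mul_nonneg hγ0.le hnn) ?_
    intro y'' hy''
    have hv := hΨy'' ⟨y'', hy''⟩
    exact mul_le_mul_of_nonneg_left hv hγ0.le
  have hld := le_ld (M := M) hγ0.le hγ1 (.dia a Ψ) x y
  have hfin : sat M γ (.dia a Ψ) x - sat M γ (.dia a Ψ) y ≤ ε :=
    le_trans (le_trans (le_abs_self _) hld) h
  have hgap : γ * 1 - γ * (1 - (ε / γ + δ)) = ε + γ * δ := by
    field_simp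
    ring
  nlinarith [hδpos, hγ0]

lemma ld_isBisim {M : PA S Act AP} (hM : M.InputEnabled) {γ : ℝ} (hγ0 : 0 < γ) (hγ1 : γ ≤ 1) :
    IsApproxBisim M γ (fun ε x y => ld M γ x y ≤ ε) := by
  constructor
  · intro ε x y hxy
    rwa [ld_comm] at hxy
  · intro ε x y hxy
    refine ⟨le_trans (dAP_le_ld hγ0.le hγ1 x y) hxy, ?_⟩
    intro a x' hx'
    exact transfer hM hγ0 hγ1 hxy a x' hx'

end Helpers

theorem stmt14 {S Act AP : Type} [Fintype S] [Fintype AP] [DecidableEq AP]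
    (M : PA S Act AP) (hM : M.InputEnabled) (γ : ℝ) (hγ0 : 0 < γ) (hγ1 : γ ≤ 1)
    (μ ν : ProbDist S) :
    Db M γ μ ν = ⨆ φ : Fml AP Act, |sat M γ φ μ - sat M γ φ ν| := by
  have hle1 : Db M γ μ ν ≤ ld M γ μ ν := by
    apply csInf_le ⟨0, fun e he => he.1⟩
    exact ⟨ld_nonneg M γ μ ν, ⟨fun ε x y => ld M γ x y ≤ ε, ld_isBisim hM hγ0 hγ1, le_rfl⟩⟩
  have hle2 : ld M γ μ ν ≤ Db M γ μ ν := by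
    have hmem : (1:ℝ) ∈ {ε | 0 ≤ ε ∧ ApproxBisimilar M γ ε μ ν} :=
      ⟨zero_le_one, approxBisimilar_one hM hγ0 hγ1 μ ν⟩
    apply le_csInf ⟨1, hmem⟩
    rintro ε ⟨hε0, hb⟩
    exact ld_le (fun φ => sat_sound hγ0 hγ1 φ ε μ ν hb)
  exact le_antisymm hle1 hle2
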